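/- arXiv:2206.07767 — 10 statements merged into one kernel-verified Lean document; each statement's English description precedes it below -/
import Mathlib

section
/- Let D ≥ 1, let u : ℝ^D → ℝ be 1-Lipschitz, let P be a Borel probability measure on ℝ^D with finite first moment, and let T : ℝ^D → ℝ^D be a measurable map such that the pushforward Q = T♯P has finite first moment and u(x) − u(T(x)) = ‖x − T(x)‖₂ holds for P-almost every x. Then T is an optimal transport map from P to Q: for every coupling π' of P and Q, ∫ ‖x − T(x)‖₂ dP(x) ≤ ∫ ‖x − y‖₂ dπ'(x, y). -/
open MeasureTheory

private lemma lip_integrable {E : Type*} [NormedAddCommGroup E] [NormedSpace ℝ E]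
    [MeasurableSpace E] [OpensMeasurableSpace E]
    (u : E → ℝ) (hu : LipschitzWith 1 u) (μ : Measure E) [IsProbabilityMeasure μ]
    (hμ : Integrable (fun x => ‖x‖) μ) : Integrable u μ := by
  refine Integrable.mono' (hμ.add (integrable_const ‖u 0‖))
    hu.continuous.aestronglyMeasurable ?_
  filter_upwards with x
  have h := hu.dist_le_mul x 0
  simp only [NNReal.coe_one, one_mul] at h
  have hb : ‖u x - u 0‖ ≤ ‖x‖ := by simpa [dist_eq_norm] using h
  calc ‖u x‖ = ‖(u x - u 0) + u 0‖ := by ring_nf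
    _ ≤ ‖u x - u 0‖ + ‖u 0‖ := norm_add_le _ _
    _ ≤ ‖x‖ + ‖u 0‖ := add_le_add_left hb _

/-- Ray monotone transport maps are optimal. -/
theorem ray_monotone_map_optimal
    (D : ℕ) (hD : 1 ≤ D)
    (u : EuclideanSpace ℝ (Fin D) → ℝ) (hu : LipschitzWith 1 u)
    (P : Measure (EuclideanSpace ℝ (Fin D))) [IsProbabilityMeasure P]
    (hPmom : Integrable (fun x => ‖x‖) P)
    (T : EuclideanSpace ℝ (Fin D) → EuclideanSpace ℝ (Fin D))
    (hT : Measurable T)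
    (hQmom : Integrable (fun y => ‖y‖) (P.map T))
    (hmon : ∀ᵐ x ∂P, u x - u (T x) = ‖x - T x‖) :
    ∀ (π' : Measure (EuclideanSpace ℝ (Fin D) × EuclideanSpace ℝ (Fin D))),
      IsProbabilityMeasure π' →
      π'.map Prod.fst = P → π'.map Prod.snd = P.map T →
      ∫ x, ‖x - T x‖ ∂P ≤ ∫ p, ‖p.1 - p.2‖ ∂π' := by
  intro π' hπ' hfst hsnd
  haveI : IsProbabilityMeasure (P.map T) := Measure.isProbabilityMeasure_map hT.aemeasurable
  have huP : Integrable u P := lip_integrable u hu P hPmom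
  have huQ : Integrable u (P.map T) := lip_integrable u hu _ hQmom
  have huT : Integrable (fun x => u (T x)) P :=
    (integrable_map_measure hu.continuous.aestronglyMeasurable hT.aemeasurable).mp huQ
  -- LHS = ∫ u dP - ∫ u dQ
  have h1 : ∫ x, ‖x - T x‖ ∂P = ∫ x, u x ∂P - ∫ y, u y ∂(P.map T) := by
    rw [integral_map hT.aemeasurable hu.continuous.aestronglyMeasurable,
      ← integral_sub huP huT]
    exact (integral_congr_ae (hmon.mono fun x hx => hx.symm))
  -- integrability over π'
  have hfstm : AEMeasurable (Prod.fst : _ × _ → EuclideanSpace ℝ (Fin D)) π' :=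
    measurable_fst.aemeasurable
  have hsndm : AEMeasurable (Prod.snd : _ × _ → EuclideanSpace ℝ (Fin D)) π' :=
    measurable_snd.aemeasurable
  have hufst : Integrable (fun p : _ × _ => u p.1) π' := by
    have := (integrable_map_measure hu.continuous.aestronglyMeasurable hfstm).mp
      (hfst ▸ huP)
    exact this
  have husnd : Integrable (fun p : _ × _ => u p.2) π' := by
    exact (integrable_map_measure hu.continuous.aestronglyMeasurable hsndm).mp (hsnd ▸ huQ)
  have hnfst : Integrable (fun p : _ × _ => ‖p.1‖) π' :=
    (integrable_map_measure (continuous_norm.aestronglyMeasurable) hfstm).mp (hfst ▸ hPmom)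
  have hnsnd : Integrable (fun p : _ × _ => ‖p.2‖) π' :=
    (integrable_map_measure (continuous_norm.aestronglyMeasurable) hsndm).mp (hsnd ▸ hQmom)
  have hcost : Integrable (fun p : _ × _ => ‖p.1 - p.2‖) π' := by
    refine Integrable.mono' (hnfst.add hnsnd)
      ((continuous_fst.sub continuous_snd).norm.aestronglyMeasurable) ?_
    filter_upwards with p
    simpa using norm_sub_le p.1 p.2
  -- ∫ u dP - ∫ u dQ = ∫ (u p.1 - u p.2) dπ'
  have e1 : ∫ p : _ × _, u p.1 ∂π' = ∫ x, u x ∂P := by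
    rw [← hfst, integral_map hfstm hu.continuous.aestronglyMeasurable]
  have e2 : ∫ p : _ × _, u p.2 ∂π' = ∫ y, u y ∂(P.map T) := by
    rw [← hsnd, integral_map hsndm hu.continuous.aestronglyMeasurable]
  have h2 : ∫ x, u x ∂P - ∫ y, u y ∂(P.map T) = ∫ p, (u p.1 - u p.2) ∂π' := by
    rw [integral_sub hufst husnd, e1, e2]
  rw [h1, h2]
  refine integral_mono (hufst.sub husnd) hcost fun p => ?_
  have h := hu.dist_le_mul p.1 p.2
  simp only [NNReal.coe_one, one_mul] at h
  calc u p.1 - u p.2 ≤ |u p.1 - u p.2| := le_abs_self _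
    _ ≤ ‖p.1 - p.2‖ := by rw [← Real.dist_eq]; simpa [dist_eq_norm] using h
end

section
/- Let D ≥ 1, let S ⊆ ℝ^D be a nonempty compact set, and let f* : ℝ^D → ℝ be 1-Lipschitz. Then for every ε > 0 there exist N ≥ 1 and parameters a : Fin N → ℝ^D, b : Fin N → ℝ such that the MinFunnel function u(x) = min over n of (‖x − a_n‖₂ + b_n) satisfies sup_{x ∈ S} |u(x) − f*(x)| ≤ ε. -/
/-- MinFunnels are universal approximators of 1-Lipschitz functions on
nonempty compact sets. -/
theorem minFunnel_universal_approximation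
    (D : ℕ) (hD : 1 ≤ D)
    (S : Set (EuclideanSpace ℝ (Fin D))) (hSne : S.Nonempty) (hS : IsCompact S)
    (fstar : EuclideanSpace ℝ (Fin D) → ℝ) (hf : LipschitzWith 1 fstar)
    (ε : ℝ) (hε : 0 < ε) :
    ∃ (N : ℕ) (_ : 1 ≤ N) (a : Fin N → EuclideanSpace ℝ (Fin D)) (b : Fin N → ℝ),
      ∀ x ∈ S, |(⨅ n : Fin N, (‖x - a n‖ + b n)) - fstar x| ≤ ε := by
  -- cover S by balls of radius ε/2 centered at points of S
  have hcov : S ⊆ ⋃ p : S, Metric.ball (p : EuclideanSpace ℝ (Fin D)) (ε / 2) := by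
    intro x hx
    exact Set.mem_iUnion.2 ⟨⟨x, hx⟩, Metric.mem_ball_self (by linarith)⟩
  obtain ⟨t, ht⟩ := hS.elim_finite_subcover
    (fun p : S => Metric.ball (p : EuclideanSpace ℝ (Fin D)) (ε / 2))
    (fun p => Metric.isOpen_ball) hcov
  -- t is nonempty
  obtain ⟨x0, hx0⟩ := hSne
  obtain ⟨p0, hp0t, _⟩ := Set.mem_iUnion₂.1 (ht hx0)
  have htne : t.Nonempty := ⟨p0, hp0t⟩
  set N := t.card with hN
  have hN1 : 1 ≤ N := Finset.card_pos.2 htne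
  let e : Fin N ≃ t := t.equivFin.symm
  refine ⟨N, hN1, fun n => ((e n : S) : EuclideanSpace ℝ (Fin D)),
    fun n => fstar ((e n : S) : EuclideanSpace ℝ (Fin D)), ?_⟩
  haveI : Nonempty (Fin N) := ⟨⟨0, hN1⟩⟩
  intro x hx
  set a : Fin N → EuclideanSpace ℝ (Fin D) := fun n => ((e n : S) : EuclideanSpace ℝ (Fin D))
  have hlip : ∀ n : Fin N, |fstar x - fstar (a n)| ≤ ‖x - a n‖ := by
    intro n
    have := hf.dist_le_mul x (a n)
    simpa [Real.dist_eq, dist_eq_norm] using this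
  -- lower bound: each term ≥ fstar x
  have hlo : fstar x ≤ ⨅ n : Fin N, (‖x - a n‖ + fstar (a n)) := by
    apply le_ciInf
    intro n
    have := hlip n
    have h1 : fstar x - fstar (a n) ≤ ‖x - a n‖ := (abs_le.1 this).2
    linarith
  -- upper bound: there is a close center
  obtain ⟨p, hpt, hxp⟩ := Set.mem_iUnion₂.1 (ht hx)
  have hball : dist x ((p : S) : EuclideanSpace ℝ (Fin D)) < ε / 2 := hxp
  obtain ⟨n, hn⟩ : ∃ n : Fin N, a n = ((p : S) : EuclideanSpace ℝ (Fin D)) := by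
    refine ⟨e.symm ⟨p, hpt⟩, ?_⟩
    simp [a]
  have hup : (⨅ n : Fin N, (‖x - a n‖ + fstar (a n))) ≤ fstar x + ε := by
    have hbdd : BddBelow (Set.range fun n : Fin N => ‖x - a n‖ + fstar (a n)) :=
      Set.Finite.bddBelow (Set.finite_range _)
    refine le_trans (ciInf_le hbdd n) ?_
    have hd : ‖x - a n‖ < ε / 2 := by
      rw [hn, ← dist_eq_norm]; exact hball
    have h2 : fstar (a n) - fstar x ≤ ‖x - a n‖ := by
      have := hlip n
      linarith [(abs_le.1 this).1]
    linarith
  have h1 : fstar x - ε ≤ ⨅ n : Fin N, (‖x - a n‖ + fstar (a n)) := by linarith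
  rw [abs_le]
  constructor <;> [linarith; linarith]
end

section
/- Let D ≥ 1, let u : ℝ^D → ℝ be 1-Lipschitz, and let x, y ∈ ℝ^D with x ≠ y satisfy u(x) − u(y) = ‖x − y‖₂. Let z = t·x + (1−t)·y for some t ∈ (0, 1), and suppose u is Fréchet differentiable at z. Then the gradient of u at z equals (x − y)/‖x − y‖₂. -/
/-- On the interior of a transport segment of a 1-Lipschitz function, the
gradient (where it exists) is the unit direction of the segment. -/
theorem gradient_on_transport_ray
    (D : ℕ) (hD : 1 ≤ D)
    (u : EuclideanSpace ℝ (Fin D) → ℝ) (hu : LipschitzWith 1 u)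
    (x y : EuclideanSpace ℝ (Fin D)) (hne : x ≠ y)
    (hxy : u x - u y = ‖x - y‖)
    (t : ℝ) (ht : t ∈ Set.Ioo (0 : ℝ) 1)
    (z : EuclideanSpace ℝ (Fin D)) (hz : z = t • x + (1 - t) • y)
    (hdiff : DifferentiableAt ℝ u z) :
    gradient u z = ‖x - y‖⁻¹ • (x - y) := by
  obtain ⟨ht0, ht1⟩ := ht
  set L : ℝ := ‖x - y‖ with hLdef
  have hL : 0 < L := by
    simpa [hLdef] using norm_pos_iff.2 (sub_ne_zero.2 hne)
  set e : EuclideanSpace ℝ (Fin D) := L⁻¹ • (x - y) with hedef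
  have he : ‖e‖ = 1 := by
    rw [hedef, norm_smul, norm_inv, Real.norm_eq_abs, abs_of_pos hL]
    field_simp
    exact hLdef.symm
  -- key lemma: value of u on the segment near z
  have key : ∀ s : ℝ, s ∈ Set.Ioo (-(t*L)) ((1-t)*L) →
      u (z + s • e) = u y + t*L + s := by
    intro s hs
    obtain ⟨hs1, hs2⟩ := hs
    set p := z + s • e with hpdef
    have hpy : p - y = (t + s/L) • (x - y) := by
      rw [hpdef, hz, hedef]
      rw [smul_smul]
      rw [add_smul]
      module
    have hxp : x - p = (1 - t - s/L) • (x - y) := by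
      rw [hpdef, hz, hedef, smul_smul]
      rw [sub_smul, sub_smul, one_smul]
      module
    have hc1 : 0 ≤ t + s/L := by
      have hsL : -t < s / L := by rw [lt_div_iff₀ hL]; nlinarith
      linarith
    have hc2 : 0 ≤ 1 - t - s/L := by
      have hsL : s / L < 1 - t := by rw [div_lt_iff₀ hL]; nlinarith
      linarith
    have hnpy : ‖p - y‖ = t*L + s := by
      rw [hpy, norm_smul, Real.norm_eq_abs, abs_of_nonneg hc1, ← hLdef]
      field_simp
    have hnxp : ‖x - p‖ = (1-t)*L - s := by
      rw [hxp, norm_smul, Real.norm_eq_abs, abs_of_nonneg hc2, ← hLdef]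
      field_simp
    have h1 : u x - u p ≤ ‖x - p‖ := by
      have := hu.dist_le_mul x p
      rw [Real.dist_eq, NNReal.coe_one, one_mul, dist_eq_norm] at this
      exact (le_abs_self _).trans this
    have h2 : u p - u y ≤ ‖p - y‖ := by
      have := hu.dist_le_mul p y
      rw [Real.dist_eq, NNReal.coe_one, one_mul, dist_eq_norm] at this
      exact (le_abs_self _).trans this
    rw [hnpy] at h2
    rw [hnxp] at h1
    linarith
  -- gradient facts
  have hgrad : HasGradientAt u (gradient u z) z := hdiff.hasGradientAt
  have hfd : HasFDerivAt u ((InnerProductSpace.toDual ℝ _) (gradient u z)) z :=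
    hgrad
  set g := gradient u z with hgdef
  -- directional derivative along e is 1
  have hφ : HasDerivAt (fun s : ℝ => z + s • e) e 0 := by
    simpa using ((hasDerivAt_id (0:ℝ)).smul_const e).const_add z
  have hcomp : HasDerivAt (fun s : ℝ => u (z + s • e)) (inner ℝ g e : ℝ) 0 := by
    have := HasFDerivAt.comp_hasDerivAt 0 (show HasFDerivAt u ((InnerProductSpace.toDual ℝ _) g) ((fun s : ℝ => z + s • e) 0) by simpa using hfd) hφ
    simpa [Function.comp_def, InnerProductSpace.toDual_apply_apply] using this
  have haff : HasDerivAt (fun s : ℝ => u (z + s • e)) 1 0 := by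
    have hlin : HasDerivAt (fun s : ℝ => u y + t*L + s) 1 0 := by
      simpa using (hasDerivAt_id (0:ℝ)).const_add (u y + t*L)
    apply hlin.congr_of_eventuallyEq
    have hmem : Set.Ioo (-(t*L)) ((1-t)*L) ∈ nhds (0:ℝ) :=
      Ioo_mem_nhds (by nlinarith) (by nlinarith)
    filter_upwards [hmem] with s hs
    rw [key s hs]
  have hinner : (inner ℝ g e : ℝ) = 1 := hcomp.unique haff
  -- norm of gradient at most 1
  have hgle : ‖g‖ ≤ 1 := by
    have := hfd.le_of_lipschitz hu
    rwa [LinearIsometryEquiv.norm_map, NNReal.coe_one] at this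
  -- conclude
  have hsq : ‖g - e‖ ^ 2 ≤ 0 := by
    rw [norm_sub_sq_real, hinner, he]
    nlinarith [norm_nonneg g, sq_nonneg (‖g‖ - 1)]
  have hn2 : ‖g - e‖ ^ 2 = 0 := le_antisymm hsq (sq_nonneg _)
  have hn : ‖g - e‖ = 0 := pow_eq_zero_iff (two_ne_zero) |>.mp hn2
  have : g - e = 0 := norm_eq_zero.1 hn
  exact sub_eq_zero.1 this
end

section
/- Let D ≥ 1, let N ≥ 1, and let a : Fin N → ℝ^D and b : Fin N → ℝ be parameters such that the centers a_n are pairwise distinct and for all indices n₁ ≠ n₂ one has ‖a_{n₁} − a_{n₂}‖₂ ≠ |b_{n₁} − b_{n₂}|. Let u(x) = min over n of (‖x − a_n‖₂ + b_n) be the associated MinFunnel, and let x ∈ ℝ^D be a point at which u is Fréchet differentiable. Then there is exactly one index m with u(x) = ‖x − a_m‖₂ + b_m, and moreover x ≠ a_m. -/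
open Filter Set

private lemma mf_slope_le {φ : ℝ → ℝ} {c s : ℝ} (h : HasDerivAt φ c 0)
    (hb : ∀ᶠ t in nhdsWithin 0 (Set.Ioi 0), φ t - φ 0 ≤ t * s) : c ≤ s := by
  have ht : Tendsto (slope φ 0) (nhdsWithin 0 (Set.Ioi 0)) (nhds c) :=
    (hasDerivAt_iff_tendsto_slope.mp h).mono_left
      (nhdsWithin_mono _ fun t ht => ne_of_gt ht)
  refine le_of_tendsto ht ?_
  filter_upwards [hb, self_mem_nhdsWithin] with t h1 h2
  rw [slope_def_field]
  rw [Set.mem_Ioi] at h2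
  rw [sub_zero, div_le_iff₀ h2]
  linarith [h1]

private lemma mf_slope_ge {φ : ℝ → ℝ} {c s : ℝ} (h : HasDerivAt φ c 0)
    (hb : ∀ᶠ t in nhdsWithin 0 (Set.Ioi 0), t * s ≤ φ t - φ 0) : s ≤ c := by
  have ht : Tendsto (slope φ 0) (nhdsWithin 0 (Set.Ioi 0)) (nhds c) :=
    (hasDerivAt_iff_tendsto_slope.mp h).mono_left
      (nhdsWithin_mono _ fun t ht => ne_of_gt ht)
  refine ge_of_tendsto ht ?_
  filter_upwards [hb, self_mem_nhdsWithin] with t h1 h2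
  rw [slope_def_field]
  rw [Set.mem_Ioi] at h2
  rw [sub_zero, le_div_iff₀ h2]
  linarith [h1]

private lemma mf_slope_eq {φ : ℝ → ℝ} {c s : ℝ} (h : HasDerivAt φ c 0)
    (hb : ∀ᶠ t in nhdsWithin 0 (Set.Ioi 0), φ t - φ 0 = t * s) : c = s :=
  le_antisymm (mf_slope_le h (hb.mono fun _ h => le_of_eq h))
    (mf_slope_ge h (hb.mono fun _ h => ge_of_eq h))

set_option maxHeartbeats 1000000 in
/-- At a differentiability point of a MinFunnel (with generic parameters),
the minimum is attained at exactly one funnel, and the point is not the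
center of that funnel. -/
theorem minFunnel_unique_argmin
    (D : ℕ) (hD : 1 ≤ D) (N : ℕ) (hN : 1 ≤ N)
    (a : Fin N → EuclideanSpace ℝ (Fin D)) (b : Fin N → ℝ)
    (hdist : ∀ n₁ n₂ : Fin N, n₁ ≠ n₂ → a n₁ ≠ a n₂)
    (hgen : ∀ n₁ n₂ : Fin N, n₁ ≠ n₂ → ‖a n₁ - a n₂‖ ≠ |b n₁ - b n₂|)
    (x : EuclideanSpace ℝ (Fin D))
    (hdiff : DifferentiableAt ℝ (fun z => ⨅ n : Fin N, (‖z - a n‖ + b n)) x) :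
    ∃ m : Fin N,
      (⨅ n : Fin N, (‖x - a n‖ + b n)) = ‖x - a m‖ + b m ∧ x ≠ a m ∧
      ∀ m' : Fin N, (⨅ n : Fin N, (‖x - a n‖ + b n)) = ‖x - a m'‖ + b m' →
        m' = m := by
  classical
  haveI : Nonempty (Fin N) := ⟨⟨0, hN⟩⟩
  set u : EuclideanSpace ℝ (Fin D) → ℝ := fun z => ⨅ n : Fin N, (‖z - a n‖ + b n) with hu
  have bdd : ∀ z : EuclideanSpace ℝ (Fin D),
      BddBelow (Set.range fun n : Fin N => ‖z - a n‖ + b n) :=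
    fun z => (Set.finite_range _).bddBelow
  have hle : ∀ (z : EuclideanSpace ℝ (Fin D)) (n : Fin N), u z ≤ ‖z - a n‖ + b n :=
    fun z n => ciInf_le (bdd z) n
  -- Lipschitz bound
  have hlip : ∀ z y : EuclideanSpace ℝ (Fin D), u z ≤ u y + ‖z - y‖ := by
    intro z y
    have h1 : ∀ n : Fin N, u z - ‖z - y‖ ≤ ‖y - a n‖ + b n := by
      intro n
      have h2 : ‖z - a n‖ ≤ ‖z - y‖ + ‖y - a n‖ := by
        calc ‖z - a n‖ = ‖(z - y) + (y - a n)‖ := by abel_nf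
        _ ≤ ‖z - y‖ + ‖y - a n‖ := norm_add_le _ _
      have := hle z n
      linarith
    have := le_ciInf h1
    linarith [this]
  obtain ⟨m, hm⟩ := Finite.exists_min (fun n : Fin N => ‖x - a n‖ + b n)
  have hux : u x = ‖x - a m‖ + b m := le_antisymm (hle x m) (le_ciInf hm)
  -- derivative along lines
  have hf : HasFDerivAt u (fderiv ℝ u x) x := hdiff.hasFDerivAt
  set f := fderiv ℝ u x with hfdef
  have hφ : ∀ w : EuclideanSpace ℝ (Fin D),
      HasDerivAt (fun t : ℝ => u (x + t • w)) (f w) 0 := by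
    intro w
    have hline : HasDerivAt (fun t : ℝ => x + t • w) w 0 := by
      simpa using ((hasDerivAt_id (0 : ℝ)).smul_const w).const_add x
    have hf' : HasFDerivAt u f (x + (0 : ℝ) • w) := by simpa using hf
    exact hf'.comp_hasDerivAt 0 hline
  -- |f w| ≤ ‖w‖
  have hfw_le : ∀ w : EuclideanSpace ℝ (Fin D), f w ≤ ‖w‖ := by
    intro w
    refine mf_slope_le (hφ w) ?_
    filter_upwards [self_mem_nhdsWithin] with t ht
    rw [Set.mem_Ioi] at ht
    simp only [zero_smul, add_zero]
    have := hlip (x + t • w) x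
    have hn : ‖x + t • w - x‖ = t * ‖w‖ := by
      rw [add_sub_cancel_left, norm_smul, Real.norm_eq_abs, abs_of_pos ht]
    linarith [this, hn.le, hn.ge]
  -- key directional derivative at argmin funnels
  have hkey : ∀ n : Fin N, u x = ‖x - a n‖ + b n → x ≠ a n →
      f (a n - x) = -‖a n - x‖ := by
    intro n hn hxn
    set v : EuclideanSpace ℝ (Fin D) := a n - x with hv
    have hr : (0:ℝ) < ‖v‖ := norm_pos_iff.mpr (sub_ne_zero.mpr (Ne.symm hxn))
    have hxval : ‖x - a n‖ = ‖v‖ := by rw [hv, norm_sub_rev]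
    have heq : f v = -‖v‖ := by
      refine mf_slope_eq (hφ v) ?_
      filter_upwards [Ioo_mem_nhdsGT_of_mem (Set.left_mem_Ico.mpr one_pos)] with t ht
      obtain ⟨ht0, ht1⟩ := ht
      simp only [zero_smul, add_zero]
      have hxv : x + t • v - a n = (t - 1) • v := by
        rw [hv]; module
      have h1 : u (x + t • v) ≤ (1 - t) * ‖v‖ + b n := by
        have := hle (x + t • v) n
        rw [hxv, norm_smul, Real.norm_eq_abs, abs_of_neg (by linarith : t - 1 < 0)] at this
        linarith
      have h2 : u x ≤ u (x + t • v) + t * ‖v‖ := by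
        have := hlip x (x + t • v)
        have hn2 : ‖x - (x + t • v)‖ = t * ‖v‖ := by
          rw [show x - (x + t • v) = -(t • v) by abel, norm_neg, norm_smul,
            Real.norm_eq_abs, abs_of_pos ht0]
        linarith [this, hn2.le, hn2.ge]
      have hn' : u x = ‖v‖ + b n := by rw [hn, hxval]
      nlinarith [h1, h2, hn']
    simpa using heq
  -- x is not the center of any argmin funnel
  have hnotcenter : ∀ n : Fin N, u x = ‖x - a n‖ + b n → x ≠ a n := by
    intro n hn hxn
    by_cases hex : ∃ k : Fin N, k ≠ n ∧ u x = ‖x - a k‖ + b k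
    · obtain ⟨k, hkn, hk⟩ := hex
      have hxk : x ≠ a k := by
        rw [hxn]; exact hdist n k (Ne.symm hkn)
      have h0 : ‖x - a n‖ = 0 := by rw [hxn, sub_self, norm_zero]
      have h1 : ‖x - a k‖ = b n - b k := by rw [hn, h0] at hk; linarith
      have h2 : ‖a n - a k‖ = |b n - b k| := by
        rw [← hxn, h1, abs_of_pos]
        rw [← h1]
        exact norm_pos_iff.mpr (sub_ne_zero.mpr hxk)
      exact hgen n k (Ne.symm hkn) h2
    · -- unique argmin with x = a n : u equals that funnel locally
      push_neg at hex
      have hev : u =ᶠ[nhds x] fun z => ‖z - a n‖ + b n := by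
        have hall : ∀ᶠ z in nhds x, ∀ k : Fin N, ‖z - a n‖ + b n ≤ ‖z - a k‖ + b k := by
          rw [eventually_all]
          intro k
          by_cases hkn : k = n
          · subst hkn; exact Eventually.of_forall fun z => le_refl _
          · rcases lt_or_eq_of_le (hle x k) with h | h
            · rw [hn] at h
              have hcn : ContinuousAt (fun z : EuclideanSpace ℝ (Fin D) => ‖z - a n‖ + b n) x :=
                ((continuous_id.sub continuous_const).norm.add continuous_const).continuousAt
              have hck : ContinuousAt (fun z : EuclideanSpace ℝ (Fin D) => ‖z - a k‖ + b k) x :=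
                ((continuous_id.sub continuous_const).norm.add continuous_const).continuousAt
              exact (hcn.eventually_lt hck h).mono fun z hz => le_of_lt hz
            · exact absurd h (hex k hkn)
        filter_upwards [hall] with z hz
        exact le_antisymm (hle z n) (le_ciInf hz)
      have hdn : DifferentiableAt ℝ (fun z : EuclideanSpace ℝ (Fin D) => ‖z - a n‖ + b n) x :=
        hdiff.congr_of_eventuallyEq hev.symm
      have hdn2 : DifferentiableAt ℝ (fun z : EuclideanSpace ℝ (Fin D) => ‖z - a n‖) x := by
        simpa using hdn.sub_const (b n)
      -- contradiction: norm not differentiable at the center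
      set g := fderiv ℝ (fun z : EuclideanSpace ℝ (Fin D) => ‖z - a n‖) x with hg
      have hg' : HasFDerivAt (fun z : EuclideanSpace ℝ (Fin D) => ‖z - a n‖) g x :=
        hdn2.hasFDerivAt
      have hdir : ∀ w : EuclideanSpace ℝ (Fin D), g w = ‖w‖ := by
        intro w
        have hline : HasDerivAt (fun t : ℝ => x + t • w) w 0 := by
          simpa using ((hasDerivAt_id (0 : ℝ)).smul_const w).const_add x
        have hg'' : HasFDerivAt (fun z : EuclideanSpace ℝ (Fin D) => ‖z - a n‖) g
            (x + (0 : ℝ) • w) := by simpa using hg'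
        have hψ : HasDerivAt (fun t : ℝ => ‖x + t • w - a n‖) (g w) 0 :=
          hg''.comp_hasDerivAt (l := fun z : EuclideanSpace ℝ (Fin D) => ‖z - a n‖)
            (f := fun t : ℝ => x + t • w) 0 hline
        refine mf_slope_eq hψ ?_
        filter_upwards [self_mem_nhdsWithin] with t ht
        rw [Set.mem_Ioi] at ht
        have e1 : x + t • w - a n = t • w := by rw [hxn]; abel
        have e0 : x + (0:ℝ) • w - a n = (0 : EuclideanSpace ℝ (Fin D)) := by
          rw [hxn]; simp
        simp only [e1, zero_smul, add_zero]
        rw [show (x - a n : EuclideanSpace ℝ (Fin D)) = 0 by rw [hxn, sub_self]]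
        rw [norm_zero, norm_smul, Real.norm_eq_abs, abs_of_pos ht]
        ring
      have hvne : (EuclideanSpace.single (⟨0, hD⟩ : Fin D) (1:ℝ)) ≠ 0 := by
        intro h
        have := congrFun (congrArg (fun v : EuclideanSpace ℝ (Fin D) => (v : Fin D → ℝ)) h)
          ⟨0, hD⟩
        simpa using this
      set w := EuclideanSpace.single (⟨0, hD⟩ : Fin D) (1:ℝ) with hwdef
      have h1 : g w = ‖w‖ := hdir w
      have h2 : g (-w) = ‖w‖ := by rw [hdir (-w), norm_neg]
      rw [map_neg, h1] at h2
      have : ‖w‖ = 0 := by linarith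
      exact hvne (norm_eq_zero.mp this)
  -- two distinct argmins are impossible
  have huniq : ∀ n₁ n₂ : Fin N, u x = ‖x - a n₁‖ + b n₁ → u x = ‖x - a n₂‖ + b n₂ →
      n₁ = n₂ := by
    intro n₁ n₂ h₁ h₂
    by_contra hne
    have hx₁ : x ≠ a n₁ := hnotcenter n₁ h₁
    have hx₂ : x ≠ a n₂ := hnotcenter n₂ h₂
    -- dual vector
    set gv : EuclideanSpace ℝ (Fin D) :=
      (InnerProductSpace.toDual ℝ (EuclideanSpace ℝ (Fin D))).symm f with hgv
    have hgw : ∀ w : EuclideanSpace ℝ (Fin D), (inner ℝ gv w : ℝ) = f w := fun w =>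
      InnerProductSpace.toDual_symm_apply
    have hgnorm : ‖gv‖ ≤ 1 := by
      have h := hfw_le gv
      rw [← hgw gv, real_inner_self_eq_norm_sq] at h
      nlinarith [norm_nonneg gv]
    have hmain : ∀ n : Fin N, u x = ‖x - a n‖ + b n →
        a n - x = ‖a n - x‖ • (-gv) ∧ ‖gv‖ = 1 := by
      intro n hn
      have hxn := hnotcenter n hn
      set v : EuclideanSpace ℝ (Fin D) := a n - x with hv
      have hr : (0:ℝ) < ‖v‖ := norm_pos_iff.mpr (sub_ne_zero.mpr (Ne.symm hxn))
      have hfv : f v = -‖v‖ := hkey n hn hxn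
      have hinner : (inner ℝ v gv : ℝ) = -‖v‖ := by
        rw [real_inner_comm, hgw]; exact hfv
      have hunit : ‖(‖v‖)⁻¹ • v‖ = 1 := by
        rw [norm_smul, Real.norm_eq_abs, abs_of_pos (inv_pos.mpr hr)]
        field_simp
      have hq : ‖(‖v‖)⁻¹ • v + gv‖ ^ 2 = ‖gv‖^2 - 1 := by
        rw [norm_add_sq_real, real_inner_smul_left, hinner, hunit]
        field_simp
        ring
      have hq2 : ‖(‖v‖)⁻¹ • v + gv‖ ^ 2 = 0 := by
        refine le_antisymm ?_ (sq_nonneg _)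
        rw [hq]
        nlinarith [norm_nonneg gv]
      have hq0' : ‖(‖v‖)⁻¹ • v + gv‖ = 0 := by
        exact (pow_eq_zero_iff two_ne_zero).mp hq2
      have hsum : (‖v‖)⁻¹ • v + gv = 0 := norm_eq_zero.mp hq0'
      have hneg : (‖v‖)⁻¹ • v = -gv := by
        rw [eq_neg_iff_add_eq_zero]; exact hsum
      constructor
      · show v = ‖v‖ • (-gv)
        calc v = ‖v‖ • ((‖v‖)⁻¹ • v) := by
              rw [smul_smul, mul_inv_cancel₀ hr.ne', one_smul]
          _ = ‖v‖ • (-gv) := by rw [hneg]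
      · rw [show gv = -((‖v‖)⁻¹ • v) by rw [hneg, neg_neg], norm_neg, hunit]
    obtain ⟨he₁, hg1⟩ := hmain n₁ h₁
    obtain ⟨he₂, _⟩ := hmain n₂ h₂
    have hdiffc : a n₁ - a n₂ = (‖a n₁ - x‖ - ‖a n₂ - x‖) • (-gv) := by
      rw [sub_smul, ← he₁, ← he₂]; abel
    have hnormdiff : ‖a n₁ - a n₂‖ = |‖a n₁ - x‖ - ‖a n₂ - x‖| := by
      rw [hdiffc, norm_smul, Real.norm_eq_abs, norm_neg, hg1, mul_one]
    have hb : ‖a n₁ - x‖ - ‖a n₂ - x‖ = b n₂ - b n₁ := by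
      have e1 : ‖a n₁ - x‖ = ‖x - a n₁‖ := by rw [norm_sub_rev]
      have e2 : ‖a n₂ - x‖ = ‖x - a n₂‖ := by rw [norm_sub_rev]
      rw [e1, e2]
      have := h₁.symm.trans h₂
      linarith
    rw [hb, abs_sub_comm] at hnormdiff
    exact hgen n₁ n₂ hne hnormdiff
  exact ⟨m, hux, hnotcenter m hux, fun m' hm' => huniq m' m hm' hux⟩
end

section
/- Let D ≥ 1, let N ≥ 1, let a : Fin N → ℝ^D and b : Fin N → ℝ, and let u(x) = min over n of (‖x − a_n‖₂ + b_n) be the associated MinFunnel. Let x ∈ ℝ^D and let m be any index attaining the minimum, i.e., u(x) = ‖x − a_m‖₂ + b_m. Then u(a_m) = b_m, and consequently u(x) − u(a_m) = ‖x − a_m‖₂. -/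
/-- The MinFunnel value at the center of an active funnel equals its offset,
so the point and the center lie on a common transport segment. -/
theorem minFunnel_value_at_active_center
    (D : ℕ) (hD : 1 ≤ D) (N : ℕ) (hN : 1 ≤ N)
    (a : Fin N → EuclideanSpace ℝ (Fin D)) (b : Fin N → ℝ)
    (x : EuclideanSpace ℝ (Fin D)) (m : Fin N)
    (hm : (⨅ n : Fin N, (‖x - a n‖ + b n)) = ‖x - a m‖ + b m) :
    (⨅ n : Fin N, (‖a m - a n‖ + b n)) = b m ∧
    (⨅ n : Fin N, (‖x - a n‖ + b n)) - (⨅ n : Fin N, (‖a m - a n‖ + b n))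
      = ‖x - a m‖ := by
  haveI : Nonempty (Fin N) := ⟨⟨0, hN⟩⟩
  have hbdd : BddBelow (Set.range fun n : Fin N => ‖x - a n‖ + b n) :=
    Set.Finite.bddBelow (Set.finite_range _)
  have hbdd2 : BddBelow (Set.range fun n : Fin N => ‖a m - a n‖ + b n) :=
    Set.Finite.bddBelow (Set.finite_range _)
  have key : (⨅ n : Fin N, (‖a m - a n‖ + b n)) = b m := by
    apply le_antisymm
    · calc (⨅ n : Fin N, (‖a m - a n‖ + b n)) ≤ ‖a m - a m‖ + b m := ciInf_le hbdd2 m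
        _ = b m := by simp
    · apply le_ciInf
      intro n
      have h1 : ‖x - a m‖ + b m ≤ ‖x - a n‖ + b n := hm ▸ ciInf_le hbdd n
      have h2 : ‖x - a n‖ ≤ ‖x - a m‖ + ‖a m - a n‖ := norm_sub_le_norm_sub_add_norm_sub x (a m) (a n)
      linarith
  exact ⟨key, by rw [key, hm]; ring⟩
end

section
/- Let D ≥ 1, let N ≥ 1, let a : Fin N → ℝ^D and b : Fin N → ℝ have pairwise distinct centers with ‖a_{n₁} − a_{n₂}‖₂ ≠ |b_{n₁} − b_{n₂}| for all n₁ ≠ n₂, and let u(x) = min over n of (‖x − a_n‖₂ + b_n). Suppose u is Fréchet differentiable at x ∈ ℝ^D and let m be the (unique) index with u(x) = ‖x − a_m‖₂ + b_m. Then x ≠ a_m and the gradient of u at x equals (x − a_m)/‖x − a_m‖₂. -/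
open InnerProductSpace

variable {E : Type*} [NormedAddCommGroup E] [InnerProductSpace ℝ E]

theorem hasFDerivAt_norm_sub' (c x : E) (h : x ≠ c) :
    HasFDerivAt (fun z : E => ‖z - c‖) (‖x - c‖⁻¹ • innerSL ℝ (x - c)) x := by
  have hne : x - c ≠ 0 := sub_ne_zero.2 h
  have hn : ‖x - c‖ ≠ 0 := norm_ne_zero_iff.2 hne
  have h1 : HasFDerivAt (fun z : E => z - c) (ContinuousLinearMap.id ℝ E) x :=
    (hasFDerivAt_id x).sub_const c
  have h2 := h1.norm_sq
  have h3 := h2.sqrt (by positivity : ‖x - c‖ ^ 2 ≠ 0)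
  have h4 : (fun y : E => Real.sqrt (‖y - c‖ ^ 2)) = fun y : E => ‖y - c‖ := by
    funext y; exact Real.sqrt_sq (norm_nonneg _)
  rw [h4] at h3
  convert h3 using 1
  ext y
  simp only [ContinuousLinearMap.smul_apply, ContinuousLinearMap.coe_smul',
    Pi.smul_apply, ContinuousLinearMap.coe_comp', Function.comp_apply,
    ContinuousLinearMap.coe_id', id_eq, two_smul, ContinuousLinearMap.add_apply,
    Real.sqrt_sq (norm_nonneg _), smul_eq_mul]
  field_simp
  ring

theorem hasGradientAt_norm_sub' (c x : E) [CompleteSpace E] (h : x ≠ c) :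
    HasGradientAt (fun z : E => ‖z - c‖) (‖x - c‖⁻¹ • (x - c)) x := by
  have := hasFDerivAt_norm_sub' c x h
  rw [hasGradientAt_iff_hasFDerivAt]
  convert this using 1
  · ext y
    simp [toDual_apply_apply, real_inner_smul_left]
  · ext y
    simp [toDual_apply_apply, real_inner_smul_left]

/-- At a differentiability point of a MinFunnel with generic parameters, the
gradient is the unit vector pointing away from the active funnel's center. -/
theorem minFunnel_gradient
    (D : ℕ) (hD : 1 ≤ D) (N : ℕ) (hN : 1 ≤ N)
    (a : Fin N → EuclideanSpace ℝ (Fin D)) (b : Fin N → ℝ)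
    (hdist : ∀ n₁ n₂ : Fin N, n₁ ≠ n₂ → a n₁ ≠ a n₂)
    (hgen : ∀ n₁ n₂ : Fin N, n₁ ≠ n₂ → ‖a n₁ - a n₂‖ ≠ |b n₁ - b n₂|)
    (x : EuclideanSpace ℝ (Fin D))
    (hdiff : DifferentiableAt ℝ (fun z => ⨅ n : Fin N, (‖z - a n‖ + b n)) x)
    (m : Fin N)
    (hm : (⨅ n : Fin N, (‖x - a n‖ + b n)) = ‖x - a m‖ + b m) :
    x ≠ a m ∧
    gradient (fun z => ⨅ n : Fin N, (‖z - a n‖ + b n)) x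
      = ‖x - a m‖⁻¹ • (x - a m) := by
  haveI : NeZero N := ⟨Nat.one_le_iff_ne_zero.mp hN⟩
  haveI hne : Nonempty (Fin N) := ⟨⟨0, hN⟩⟩
  haveI : Nonempty (Fin D) := ⟨⟨0, hD⟩⟩
  haveI : Nontrivial (EuclideanSpace ℝ (Fin D)) := inferInstance
  set u : EuclideanSpace ℝ (Fin D) → ℝ := fun z => ⨅ n : Fin N, (‖z - a n‖ + b n) with hu
  have hbdd : ∀ z : EuclideanSpace ℝ (Fin D),
      BddBelow (Set.range fun n : Fin N => ‖z - a n‖ + b n) :=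
    fun z => (Set.finite_range _).bddBelow
  have hle : ∀ z n, u z ≤ ‖z - a n‖ + b n := fun z n => ciInf_le (hbdd z) n
  -- Part 1 : x ≠ a m
  have hxa : x ≠ a m := by
    intro hx
    have hum : u x = b m := by
      show (⨅ n : Fin N, (‖x - a n‖ + b n)) = b m
      rw [hm, hx]; simp
    have hgt : ∀ n : Fin N, n ≠ m → b m < ‖x - a n‖ + b n := by
      intro n hn
      have h1 : b m ≤ ‖x - a n‖ + b n := hum ▸ hle x n
      rcases h1.lt_or_eq with h | h
      · exact h
      · exfalso
        apply hgen m n (Ne.symm hn)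
        have hxn : x - a n = a m - a n := by rw [hx]
        have : ‖x - a n‖ = b m - b n := by linarith
        rw [← hxn, this, abs_of_nonneg]
        · linarith [norm_nonneg (x - a n), this]
      -- end
    set g : Fin N → ℝ := fun n => if n = m then 1 else (‖x - a n‖ + b n - b m) / 2 with hg
    have hgpos : ∀ n, 0 < g n := by
      intro n
      by_cases h : n = m
      · simp [hg, h]
      · simp only [hg, h, if_false]
        linarith [hgt n h]
    set ε : ℝ := Finset.univ.inf' Finset.univ_nonempty g with hε
    have hεpos : 0 < ε := (Finset.lt_inf'_iff _).2 fun n _ => hgpos n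
    have hεle : ∀ n, ε ≤ g n := fun n => Finset.inf'_le _ (Finset.mem_univ n)
    have heq : ∀ᶠ z in nhds x, u z = ‖z - x‖ + b m := by
      filter_upwards [Metric.ball_mem_nhds x hεpos] with z hz
      have hzx : ‖z - x‖ < ε := by
        rw [← dist_eq_norm]; exact hz
      apply le_antisymm
      · calc u z ≤ ‖z - a m‖ + b m := hle z m
          _ = ‖z - x‖ + b m := by rw [hx]
      · apply le_ciInf
        intro n
        by_cases hnm : n = m
        · rw [hnm, ← hx]
        · have h1 : ‖x - a n‖ ≤ ‖x - z‖ + ‖z - a n‖ := norm_sub_le_norm_sub_add_norm_sub x z (a n)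
          have h2 : ε ≤ (‖x - a n‖ + b n - b m) / 2 := by
            have := hεle n
            simpa [hg, hnm] using this
          have h3 : ‖x - z‖ = ‖z - x‖ := norm_sub_rev _ _
          linarith
    have hd1 : DifferentiableAt ℝ (fun z : EuclideanSpace ℝ (Fin D) => ‖z - x‖ + b m) x := by
      have hux : u x = ‖x - x‖ + b m := by simp [hum]
      exact (Filter.EventuallyEq.differentiableAt_iff heq).mp hdiff
    have hd2 : DifferentiableAt ℝ (fun z : EuclideanSpace ℝ (Fin D) => ‖z - x‖) x := by
      have := hd1.sub_const (b m)
      simpa using this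
    have hd3 : DifferentiableAt ℝ (fun y : EuclideanSpace ℝ (Fin D) => ‖y‖) 0 := by
      have hd2' : DifferentiableAt ℝ (fun z : EuclideanSpace ℝ (Fin D) => ‖z - x‖)
          ((0 : EuclideanSpace ℝ (Fin D)) + x) := by simpa using hd2
      have hcomp := hd2'.comp 0 (differentiableAt_id.add_const x)
      simpa [Function.comp_def, add_sub_cancel_right] using hcomp
    exact not_differentiableAt_norm_zero (EuclideanSpace ℝ (Fin D)) hd3
  refine ⟨hxa, ?_⟩
  -- Part 2 : the gradient
  have hbr : HasGradientAt (fun z : EuclideanSpace ℝ (Fin D) => ‖z - a m‖ + b m)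
      (‖x - a m‖⁻¹ • (x - a m)) x := by
    have h := hasGradientAt_norm_sub' (a m) x hxa
    have : HasFDerivAt (fun z : EuclideanSpace ℝ (Fin D) => ‖z - a m‖ + b m)
        (toDual ℝ _ (‖x - a m‖⁻¹ • (x - a m))) x := by
      have := (hasGradientAt_iff_hasFDerivAt.mp h).add_const (b m)
      exact this
    exact hasGradientAt_iff_hasFDerivAt.mpr this
  have hbrd : DifferentiableAt ℝ (fun z : EuclideanSpace ℝ (Fin D) => ‖z - a m‖ + b m) x :=
    hbr.differentiableAt
  -- φ = branch − u has a global min at x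
  have hφmin : IsLocalMin (fun z => (‖z - a m‖ + b m) - u z) x := by
    apply Filter.Eventually.of_forall
    intro z
    have h1 : u z ≤ ‖z - a m‖ + b m := hle z m
    have h2 : u x = ‖x - a m‖ + b m := hm
    simp only
    linarith
  have hφd : DifferentiableAt ℝ (fun z => (‖z - a m‖ + b m) - u z) x := hbrd.sub hdiff
  have hzero := hφmin.fderiv_eq_zero
  have hfeq : fderiv ℝ u x = fderiv ℝ (fun z : EuclideanSpace ℝ (Fin D) => ‖z - a m‖ + b m) x := by
    rw [fderiv_fun_sub hbrd hdiff] at hzero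
    have := sub_eq_zero.mp hzero
    exact this.symm
  have hfu : HasFDerivAt u (toDual ℝ _ (‖x - a m‖⁻¹ • (x - a m))) x := by
    have hb' := hasGradientAt_iff_hasFDerivAt.mp hbr
    have : fderiv ℝ u x = toDual ℝ _ (‖x - a m‖⁻¹ • (x - a m)) := by
      rw [hfeq, hb'.fderiv]
    exact this ▸ hdiff.hasFDerivAt
  exact (hasGradientAt_iff_hasFDerivAt.mpr hfu).gradient
end

section
/- Let D ≥ 1, let N ≥ 1, let a : Fin N → ℝ^D and b : Fin N → ℝ have pairwise distinct centers with ‖a_{n₁} − a_{n₂}‖₂ ≠ |b_{n₁} − b_{n₂}| for all n₁ ≠ n₂, and let u(x) = min over n of (‖x − a_n‖₂ + b_n). Suppose u is Fréchet differentiable at x and let m be the unique index with u(x) = ‖x − a_m‖₂ + b_m. Then there is no point x₀ ∈ ℝ^D with x₀ ≠ a_m, a_m lying on the segment [x₀, x], and u(x₀) + ‖a_m − x₀‖₂ = b_m; in other words, a_m is the lower endpoint of the transport ray of u through x. -/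
/-- The active center `a m` is the lower endpoint of the transport ray of a
MinFunnel through a differentiability point `x`: the ray cannot be extended
below `a m`. -/
theorem minFunnel_ray_lower_endpoint
    (D : ℕ) (hD : 1 ≤ D) (N : ℕ) (hN : 1 ≤ N)
    (a : Fin N → EuclideanSpace ℝ (Fin D)) (b : Fin N → ℝ)
    (hdist : ∀ n₁ n₂ : Fin N, n₁ ≠ n₂ → a n₁ ≠ a n₂)
    (hgen : ∀ n₁ n₂ : Fin N, n₁ ≠ n₂ → ‖a n₁ - a n₂‖ ≠ |b n₁ - b n₂|)
    (x : EuclideanSpace ℝ (Fin D))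
    (hdiff : DifferentiableAt ℝ (fun z => ⨅ n : Fin N, (‖z - a n‖ + b n)) x)
    (m : Fin N)
    (hm : (⨅ n : Fin N, (‖x - a n‖ + b n)) = ‖x - a m‖ + b m) :
    ¬ ∃ x₀ : EuclideanSpace ℝ (Fin D),
        x₀ ≠ a m ∧ a m ∈ segment ℝ x₀ x ∧
        (⨅ n : Fin N, (‖x₀ - a n‖ + b n)) + ‖a m - x₀‖ = b m := by
  rintro ⟨x₀, hne, hseg, heq⟩
  haveI : Nonempty (Fin N) := ⟨m⟩
  set u : EuclideanSpace ℝ (Fin D) → ℝ := fun z => ⨅ n : Fin N, (‖z - a n‖ + b n) with hu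
  have hbdd : ∀ y : EuclideanSpace ℝ (Fin D),
      BddBelow (Set.range fun n : Fin N => ‖y - a n‖ + b n) :=
    fun y => (Set.finite_range _).bddBelow
  have hle : ∀ y (n : Fin N), u y ≤ ‖y - a n‖ + b n := fun y n => ciInf_le (hbdd y) n
  have hlip : ∀ y z, u y ≤ ‖y - z‖ + u z := by
    intro y z
    have h1 : ∀ n : Fin N, u y - ‖y - z‖ ≤ ‖z - a n‖ + b n := by
      intro n
      have h2 := hle y n
      have h3 : ‖y - a n‖ ≤ ‖y - z‖ + ‖z - a n‖ := by
        have := dist_triangle y z (a n)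
        simpa [dist_eq_norm] using this
      linarith
    have h4 : u y - ‖y - z‖ ≤ u z := le_ciInf h1
    linarith
  -- distances along the segment add up
  have hdadd : ‖a m - x₀‖ + ‖x - a m‖ = ‖x - x₀‖ := by
    have := dist_add_dist_of_mem_segment hseg
    rw [dist_eq_norm, dist_eq_norm, dist_eq_norm] at this
    rw [norm_sub_rev x₀ (a m), norm_sub_rev (a m) x, norm_sub_rev x₀ x] at this
    linarith
  -- u (a m) = b m
  have h5 : u (a m) ≤ ‖a m - x₀‖ + u x₀ := hlip (a m) x₀
  have h6 : u x ≤ ‖x - a m‖ + u (a m) := hlip x (a m)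
  have hux : u x = ‖x - a m‖ + b m := hm
  have huam : u (a m) = b m := by
    have h7 : u (a m) ≤ b m := by
      have := hle (a m) m
      simpa using this
    linarith
  -- minimizer at x₀
  obtain ⟨k, hk⟩ := exists_eq_ciInf_of_finite (f := fun n : Fin N => ‖x₀ - a n‖ + b n)
  have hux₀ : u x₀ = ‖x₀ - a k‖ + b k := hk.symm
  by_cases hkm : k = m
  · subst hkm
    have : ‖x₀ - a k‖ = 0 := by linarith [heq, hux₀, norm_nonneg (a k - x₀),
      (by rw [norm_sub_rev] : ‖a k - x₀‖ = ‖x₀ - a k‖)]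
    exact hne (by rwa [norm_sub_eq_zero_iff] at this)
  · have htri : ‖a m - a k‖ ≤ ‖a m - x₀‖ + ‖x₀ - a k‖ := by
      have := dist_triangle (a m) x₀ (a k)
      simpa [dist_eq_norm] using this
    have h8 : u (a m) ≤ ‖a m - a k‖ + b k := hle (a m) k
    -- b m - b k = ‖x₀ - a k‖ + ‖a m - x₀‖ ≥ ‖a m - a k‖ and ≤ ‖a m - a k‖
    have h9 : ‖a m - a k‖ = b m - b k := by linarith
    have h10 : (0:ℝ) ≤ b m - b k := h9 ▸ norm_nonneg _
    exact hgen m k (Ne.symm hkm) (by rw [h9, abs_of_nonneg h10])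
end

section
/- Let D ≥ 1, let f : ℝ^D → ℝ be 1-Lipschitz, and let x, y ∈ ℝ^D with x ≠ y satisfy f(x) − f(y) = ‖x − y‖₂. If f is Fréchet differentiable at x, then the gradient of f at x equals (x − y)/‖x − y‖₂. -/
/-- If a 1-Lipschitz function attains its Lipschitz bound between `x` and
`y ≠ x` and is differentiable at `x`, its gradient at `x` is the unit vector
from `y` to `x`. -/
theorem gradient_at_ray_upper_point
    (D : ℕ) (hD : 1 ≤ D)
    (f : EuclideanSpace ℝ (Fin D) → ℝ) (hf : LipschitzWith 1 f)
    (x y : EuclideanSpace ℝ (Fin D)) (hne : x ≠ y)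
    (hxy : f x - f y = ‖x - y‖)
    (hdiff : DifferentiableAt ℝ f x) :
    gradient f x = ‖x - y‖⁻¹ • (x - y) := by
  set r : ℝ := ‖x - y‖ with hrdef
  have hr : 0 < r := by
    simpa [hrdef] using norm_pos_iff.mpr (sub_ne_zero.mpr hne)
  set u : EuclideanSpace ℝ (Fin D) := r⁻¹ • (x - y) with hu
  have hun : ‖u‖ = 1 := by
    rw [hu, norm_smul, norm_inv, Real.norm_eq_abs, abs_of_pos hr, ← hrdef,
      inv_mul_cancel₀ hr.ne']
  have hlip : ∀ a b, |f a - f b| ≤ ‖a - b‖ := by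
    intro a b
    have := hf.dist_le_mul a b
    simpa [Real.dist_eq, dist_eq_norm] using this
  -- key : on the segment, f decreases linearly
  have key : ∀ t ∈ Set.Icc (0:ℝ) r, f (x - t • u) = f x - t := by
    intro t ht
    obtain ⟨ht0, htr⟩ := ht
    have hA : |f x - f (x - t • u)| ≤ t := by
      have := hlip x (x - t • u)
      have hnorm : ‖x - (x - t • u)‖ = t := by
        simp [norm_smul, hun, abs_of_nonneg ht0]
      linarith [this, hnorm ▸ this]
    have hB : |f (x - t • u) - f y| ≤ r - t := by
      have heq : x - t • u - y = (1 - t * r⁻¹) • (x - y) := by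
        rw [hu, smul_smul, sub_smul, one_smul]
        abel
      have hnorm : ‖x - t • u - y‖ = r - t := by
        rw [heq, norm_smul, Real.norm_eq_abs, ← hrdef]
        have h1 : (0:ℝ) ≤ 1 - t * r⁻¹ := by
          have : t * r⁻¹ ≤ 1 := by
            rw [← div_eq_mul_inv, div_le_one hr]; exact htr
          linarith
        rw [abs_of_nonneg h1]
        field_simp
      have := hlip (x - t • u) y
      rw [hnorm] at this
      exact this
    have hA1 := (abs_le.mp hA).2
    have hB1 := (abs_le.mp hB).2
    have hA2 := (abs_le.mp hA).1
    linarith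
  -- derivative of t ↦ f (x - t • u) at 0
  have hcurve : HasDerivAt (fun t : ℝ => x - t • u) (-u) 0 := by
    simpa using ((hasDerivAt_id (0:ℝ)).smul_const u).const_sub x
  have hfd : HasFDerivAt f (fderiv ℝ f x) ((fun t : ℝ => x - t • u) 0) := by
    simpa using hdiff.hasFDerivAt
  have hcomp : HasDerivAt (fun t : ℝ => f (x - t • u)) (fderiv ℝ f x (-u)) 0 :=
    hfd.comp_hasDerivAt 0 hcurve
  have hud : UniqueDiffWithinAt ℝ (Set.Icc (0:ℝ) r) 0 :=
    (uniqueDiffOn_Icc hr) 0 (Set.left_mem_Icc.mpr hr.le)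
  have h1 : derivWithin (fun t : ℝ => f (x - t • u)) (Set.Icc (0:ℝ) r) 0
      = fderiv ℝ f x (-u) := hcomp.hasDerivWithinAt.derivWithin hud
  have h2' : HasDerivWithinAt (fun t : ℝ => f x - t) (-1) (Set.Icc (0:ℝ) r) 0 := by
    simpa using ((hasDerivAt_id (0:ℝ)).const_sub (f x)).hasDerivWithinAt
      (s := Set.Icc (0:ℝ) r)
  have h2 : derivWithin (fun t : ℝ => f (x - t • u)) (Set.Icc (0:ℝ) r) 0 = -1 := by
    refine (h2'.congr (fun t ht => key t ht) ?_).derivWithin hud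
    simpa using key 0 (Set.left_mem_Icc.mpr hr.le)
  have hderiv : fderiv ℝ f x u = 1 := by
    have : fderiv ℝ f x (-u) = -1 := by rw [← h1, h2]
    have h3 : fderiv ℝ f x (-u) = -(fderiv ℝ f x u) := by
      rw [map_neg]
    rw [h3] at this
    linarith
  -- gradient relations
  have hgr := hdiff.hasGradientAt
  rw [hasGradientAt_iff_hasFDerivAt] at hgr
  have hfderiv : fderiv ℝ f x = InnerProductSpace.toDual ℝ _ (gradient f x) :=
    hgr.fderiv
  have hinner : (inner ℝ (gradient f x) u : ℝ) = 1 := by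
    have := hderiv
    rw [hfderiv] at this
    simpa [InnerProductSpace.toDual_apply_apply] using this
  have hnormg : ‖gradient f x‖ ≤ 1 := by
    have h4 : ‖fderiv ℝ f x‖ ≤ 1 := by
      simpa using norm_fderiv_le_of_lipschitz ℝ hf (x₀ := x)
    have : ‖gradient f x‖ = ‖fderiv ℝ f x‖ := by
      rw [hfderiv]
      exact ((InnerProductSpace.toDual ℝ _).norm_map (gradient f x)).symm
    linarith
  have hnormg' : ‖gradient f x‖ = 1 := by
    have hcs := real_inner_le_norm (gradient f x) u
    rw [hinner, hun, mul_one] at hcs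
    linarith
  have : ‖u‖ • (gradient f x) = ‖gradient f x‖ • u := by
    rw [← inner_eq_norm_mul_iff_real, hinner, hnormg', hun, mul_one]
  rw [hun, hnormg', one_smul, one_smul] at this
  rw [this]
end

section
/- Let D ≥ 1, let P be a Borel probability measure on ℝ^D with finite first moment, let u : ℝ^D → ℝ be 1-Lipschitz, and let T : ℝ^D → ℝ^D be a measurable map such that Q = T♯P has finite first moment and u(x) − u(T(x)) = ‖x − T(x)‖₂ holds for P-almost every x. Let f : ℝ^D → ℝ be any 1-Lipschitz function satisfying ∫ f(x) dP(x) − ∫ f(y) dQ(y) = ∫ ‖x − T(x)‖₂ dP(x). Then f(x) − f(T(x)) = ‖x − T(x)‖₂ holds for P-almost every x. -/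
open MeasureTheory

/-- Any 1-Lipschitz maximizer of the Kantorovich dual is itself ray
monotone along the optimal map `T`. -/
theorem dual_optimal_is_ray_monotone
    (D : ℕ) (hD : 1 ≤ D)
    (P : Measure (EuclideanSpace ℝ (Fin D))) [IsProbabilityMeasure P]
    (hPmom : Integrable (fun x => ‖x‖) P)
    (u : EuclideanSpace ℝ (Fin D) → ℝ) (hu : LipschitzWith 1 u)
    (T : EuclideanSpace ℝ (Fin D) → EuclideanSpace ℝ (Fin D))
    (hT : Measurable T)
    (hQmom : Integrable (fun y => ‖y‖) (P.map T))
    (hmon : ∀ᵐ x ∂P, u x - u (T x) = ‖x - T x‖)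
    (f : EuclideanSpace ℝ (Fin D) → ℝ) (hf : LipschitzWith 1 f)
    (hopt : ∫ x, f x ∂P - ∫ y, f y ∂(P.map T) = ∫ x, ‖x - T x‖ ∂P) :
    ∀ᵐ x ∂P, f x - f (T x) = ‖x - T x‖ := by
  have hfm : AEStronglyMeasurable f (P.map T) := hf.continuous.aestronglyMeasurable
  have hbound : ∀ x, ‖f x‖ ≤ ‖x‖ + |f 0| := by
    intro x
    have h := hf.dist_le_mul x 0
    simp only [one_mul, dist_eq_norm, sub_zero] at h
    calc ‖f x‖ = |f x| := rfl
      _ ≤ |f x - f 0| + |f 0| := by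
          have := abs_sub_abs_le_abs_sub (f x) (f 0); linarith [abs_abs (f x), abs_sub_abs_le_abs_sub (f x) (f 0), abs_nonneg (f x - f 0)]
      _ ≤ ‖x‖ + |f 0| := by
          have : |f x - f 0| ≤ ‖x‖ := by
            simpa [Real.dist_eq, dist_eq_norm, sub_zero] using h
          linarith
  have hfP : Integrable f P := by
    refine (hPmom.add (integrable_const (|f 0|))).mono'
      hf.continuous.aestronglyMeasurable ?_
    filter_upwards with x using hbound x
  have hfQ : Integrable f (P.map T) := by
    refine (hQmom.add (integrable_const (|f 0|))).mono' hfm ?_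
    filter_upwards with x using hbound x
  have hTnorm : Integrable (fun x => ‖T x‖) P := by
    have := (integrable_map_measure (μ := P) (f := T)
      (g := fun y => ‖y‖) measurable_norm.aestronglyMeasurable hT.aemeasurable).mp hQmom
    simpa [Function.comp_def] using this
  have hfT : Integrable (fun x => f (T x)) P := by
    have := (integrable_map_measure (μ := P) (f := T)
      (g := f) hfm hT.aemeasurable).mp hfQ
    simpa [Function.comp_def] using this
  have hnm : AEStronglyMeasurable (fun x => ‖x - T x‖) P :=
    ((measurable_id.sub hT).norm).aestronglyMeasurable
  have hnorm : Integrable (fun x => ‖x - T x‖) P := by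
    refine (hPmom.add hTnorm).mono' hnm ?_
    filter_upwards with x
    simpa using norm_sub_le x (T x)
  have hmap : ∫ y, f y ∂(P.map T) = ∫ x, f (T x) ∂P :=
    integral_map hT.aemeasurable hfm
  have hfsub : Integrable (fun x => f x - f (T x)) P := hfP.sub hfT
  rw [hmap, ← integral_sub hfP hfT] at hopt
  set g : EuclideanSpace ℝ (Fin D) → ℝ := fun x => ‖x - T x‖ - (f x - f (T x)) with hg
  have hgint : Integrable g P := hnorm.sub hfsub
  have hgnn : 0 ≤ᵐ[P] g := by
    filter_upwards with x
    have h := hf.dist_le_mul x (T x)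
    simp only [NNReal.coe_one, one_mul, dist_eq_norm] at h
    have : f x - f (T x) ≤ ‖x - T x‖ :=
      le_trans (le_abs_self _) h
    simp only [hg, Pi.zero_apply]
    linarith
  have hint0 : ∫ x, g x ∂P = 0 := by
    rw [show (∫ x, g x ∂P) = ∫ x, ‖x - T x‖ ∂P - ∫ x, (f x - f (T x)) ∂P from
      integral_sub hnorm hfsub, hopt]; ring
  have hz : g =ᵐ[P] 0 := (integral_eq_zero_iff_of_nonneg_ae hgnn hgint).mp hint0
  filter_upwards [hz] with x hx
  simp only [hg, Pi.zero_apply] at hx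
  linarith
end

section
/- Let D ≥ 1, let P be a Borel probability measure on ℝ^D with finite first moment that is absolutely continuous with respect to Lebesgue measure, let u : ℝ^D → ℝ be 1-Lipschitz, and let T : ℝ^D → ℝ^D be a measurable map such that Q = T♯P has finite first moment, u(x) − u(T(x)) = ‖x − T(x)‖₂ holds for P-almost every x, and T(x) ≠ x for P-almost every x. Let f : ℝ^D → ℝ be any 1-Lipschitz function satisfying ∫ f(x) dP(x) − ∫ f(y) dQ(y) = ∫ ‖x − T(x)‖₂ dP(x). Then for P-almost every x, both f and u are Fréchet differentiable at x and their gradients satisfy ∇f(x) = ∇u(x) = (x − T(x))/‖x − T(x)‖₂; in particular, the OT gradient is P-unique. -/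
open MeasureTheory InnerProductSpace

lemma grad_of_ray {F : Type*} [NormedAddCommGroup F] [InnerProductSpace ℝ F]
    [CompleteSpace F]
    (g : F → ℝ) (hg : LipschitzWith 1 g) (x y : F) (hxy : y ≠ x)
    (heq : g x - g y = ‖x - y‖) (hdiff : DifferentiableAt ℝ g x) :
    gradient g x = ‖x - y‖⁻¹ • (x - y) := by
  set w : F := y - x with hw
  have hw0 : w ≠ 0 := sub_ne_zero.2 hxy
  have hnw : ‖x - y‖ = ‖w‖ := by rw [hw, norm_sub_rev]
  have hwpos : (0:ℝ) < ‖w‖ := norm_pos_iff.2 hw0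
  -- Step 1: on the segment, g is affine
  have hseg : ∀ t ∈ Set.Icc (0:ℝ) 1, g (x + t • w) = g x - t * ‖w‖ := by
    intro t ht
    have h1 : g x - g (x + t • w) ≤ t * ‖w‖ := by
      have := hg.dist_le_mul x (x + t • w)
      rw [NNReal.coe_one, one_mul, dist_eq_norm, dist_eq_norm] at this
      have h' : ‖x - (x + t • w)‖ = t * ‖w‖ := by
        rw [show x - (x + t • w) = -(t • w) by abel, norm_neg, norm_smul,
          Real.norm_eq_abs, abs_of_nonneg ht.1]
      calc g x - g (x + t • w) ≤ |g x - g (x + t • w)| := le_abs_self _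
        _ ≤ ‖x - (x + t • w)‖ := this
        _ = t * ‖w‖ := h'
    have h2 : g (x + t • w) - g y ≤ (1 - t) * ‖w‖ := by
      have := hg.dist_le_mul (x + t • w) y
      rw [NNReal.coe_one, one_mul, dist_eq_norm, dist_eq_norm] at this
      have h' : ‖x + t • w - y‖ = (1 - t) * ‖w‖ := by
        rw [show x + t • w - y = -((1 - t) • w) by rw [hw]; module, norm_neg,
          norm_smul, Real.norm_eq_abs, abs_of_nonneg (by linarith [ht.2])]
      calc g (x + t • w) - g y ≤ |g (x + t • w) - g y| := le_abs_self _
        _ ≤ ‖x + t • w - y‖ := this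
        _ = (1 - t) * ‖w‖ := h'
    rw [hnw] at heq
    linarith
  -- Step 2: directional derivative
  have hline : HasDerivAt (fun t : ℝ => x + t • w) ((1:ℝ) • w) 0 :=
    ((hasDerivAt_id (0:ℝ)).smul_const w).const_add x
  have hφ : HasDerivAt (fun t : ℝ => g (x + t • w)) (fderiv ℝ g x w) 0 := by
    have hx0 : HasFDerivAt g (fderiv ℝ g x) (x + (0:ℝ) • w) := by
      simpa using hdiff.hasFDerivAt
    have h := hx0.comp_hasDerivAt 0 hline
    rw [one_smul] at h
    exact h
  have hψ : HasDerivWithinAt (fun t : ℝ => g x - t * ‖w‖) (-‖w‖) (Set.Icc 0 1) 0 := by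
    have : HasDerivAt (fun t : ℝ => g x - t * ‖w‖) (-‖w‖) 0 := by
      simpa using ((hasDerivAt_id (0:ℝ)).mul_const ‖w‖).const_sub (g x)
    exact this.hasDerivWithinAt
  have hφ' : HasDerivWithinAt (fun t : ℝ => g (x + t • w)) (-‖w‖) (Set.Icc 0 1) 0 :=
    hψ.congr (fun t ht => hseg t ht) (by simpa using hseg 0 (by norm_num))
  have hud : UniqueDiffWithinAt ℝ (Set.Icc (0:ℝ) 1) 0 :=
    uniqueDiffOn_Icc_zero_one 0 (by norm_num)
  have hder : fderiv ℝ g x w = -‖w‖ :=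
    hud.eq_deriv _ hφ.hasDerivWithinAt hφ'
  -- Step 3: inner product identity
  have hip : ⟪gradient g x, w⟫_ℝ = -‖w‖ := by
    have : (toDual ℝ F) (gradient g x) = fderiv ℝ g x := by
      rw [gradient, (toDual ℝ F).apply_symm_apply]
    calc ⟪gradient g x, w⟫_ℝ = (toDual ℝ F) (gradient g x) w := rfl
      _ = fderiv ℝ g x w := by rw [this]
      _ = -‖w‖ := hder
  -- Step 4: norm bound
  have hnb : ‖gradient g x‖ ≤ 1 := by
    have : ‖gradient g x‖ = ‖fderiv ℝ g x‖ := by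
      rw [gradient]; exact (toDual ℝ F).symm.norm_map _
    rw [this]
    simpa using norm_fderiv_le_of_lipschitz ℝ hg (x₀ := x)
  -- Step 5: equality in Cauchy-Schwarz
  set v := gradient g x with hv
  have key : ‖v + ‖w‖⁻¹ • w‖ ^ 2 ≤ 0 := by
    have hexp : ‖v + ‖w‖⁻¹ • w‖ ^ 2 = ‖v‖^2 + 2 * (‖w‖⁻¹ * ⟪v, w⟫_ℝ) + ‖‖w‖⁻¹ • w‖^2 := by
      rw [norm_add_sq_real, real_inner_smul_right]
    have hnorm2 : ‖‖w‖⁻¹ • w‖ = 1 := by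
      rw [norm_smul, Real.norm_eq_abs, abs_of_nonneg (inv_nonneg.2 hwpos.le),
        inv_mul_cancel₀ hwpos.ne']
    have hv2 : ‖v‖^2 ≤ 1 := by
      have : ‖v‖^2 ≤ 1^2 := pow_le_pow_left₀ (norm_nonneg _) hnb 2
      simpa using this
    rw [hexp, hnorm2, hip]
    have : ‖w‖⁻¹ * -‖w‖ = -1 := by field_simp
    rw [this]; linarith
  have hzero : v + ‖w‖⁻¹ • w = 0 := by
    have := sq_nonneg ‖v + ‖w‖⁻¹ • w‖
    have h0 : ‖v + ‖w‖⁻¹ • w‖ ^ 2 = 0 := le_antisymm key this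
    have := pow_eq_zero_iff (n := 2) (by norm_num) |>.mp h0
    exact norm_eq_zero.mp this
  show v = ‖x - y‖⁻¹ • (x - y)
  rw [eq_neg_of_add_eq_zero_left hzero, hnw, hw]
  module

/-- Uniqueness of the OT gradient: for absolutely continuous `P` and a
mass-moving ray monotone map `T`, every 1-Lipschitz maximizer `f` of the
Kantorovich dual has `P`-a.e. the same gradient as `u`, namely the unit
vector `(x - T x)/‖x - T x‖`. -/
theorem ot_gradient_unique
    (D : ℕ) (hD : 1 ≤ D)
    (P : Measure (EuclideanSpace ℝ (Fin D))) [IsProbabilityMeasure P]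
    (hPac : P ≪ (volume : Measure (EuclideanSpace ℝ (Fin D))))
    (hPmom : Integrable (fun x => ‖x‖) P)
    (u : EuclideanSpace ℝ (Fin D) → ℝ) (hu : LipschitzWith 1 u)
    (T : EuclideanSpace ℝ (Fin D) → EuclideanSpace ℝ (Fin D))
    (hT : Measurable T)
    (hQmom : Integrable (fun y => ‖y‖) (P.map T))
    (hmon : ∀ᵐ x ∂P, u x - u (T x) = ‖x - T x‖)
    (hmove : ∀ᵐ x ∂P, T x ≠ x)
    (f : EuclideanSpace ℝ (Fin D) → ℝ) (hf : LipschitzWith 1 f)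
    (hopt : ∫ x, f x ∂P - ∫ y, f y ∂(P.map T) = ∫ x, ‖x - T x‖ ∂P) :
    ∀ᵐ x ∂P, DifferentiableAt ℝ f x ∧ DifferentiableAt ℝ u x ∧
      gradient f x = ‖x - T x‖⁻¹ • (x - T x) ∧
      gradient u x = ‖x - T x‖⁻¹ • (x - T x) := by
  -- Rademacher
  have hdfP : ∀ᵐ x ∂P, DifferentiableAt ℝ f x := hPac.ae_le hf.ae_differentiableAt
  have hduP : ∀ᵐ x ∂P, DifferentiableAt ℝ u x := hPac.ae_le hu.ae_differentiableAt
  -- integrability facts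
  have fbound : ∀ (g : EuclideanSpace ℝ (Fin D) → ℝ), LipschitzWith 1 g →
      ∀ x, ‖g x‖ ≤ |g 0| + ‖x‖ := by
    intro g hg x
    have := hg.dist_le_mul x 0
    rw [NNReal.coe_one, one_mul, dist_eq_norm, dist_eq_norm, sub_zero] at this
    calc ‖g x‖ = |g x - g 0 + g 0| := by rw [Real.norm_eq_abs]; ring_nf
      _ ≤ |g x - g 0| + |g 0| := abs_add_le _ _
      _ ≤ ‖x‖ + |g 0| := by rw [Real.norm_eq_abs] at this; gcongr
      _ = |g 0| + ‖x‖ := by ring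
  have hfP : Integrable f P := by
    refine Integrable.mono' ((integrable_const (|f 0|)).add hPmom)
      hf.continuous.aestronglyMeasurable ?_
    exact Filter.Eventually.of_forall (fbound f hf)
  have hfQ : Integrable f (P.map T) := by
    refine Integrable.mono' ((integrable_const (|f 0|)).add hQmom)
      hf.continuous.aestronglyMeasurable ?_
    exact Filter.Eventually.of_forall (fbound f hf)
  have hTnorm : Integrable (fun x => ‖T x‖) P := by
    have := (integrable_map_measure (f := T) (g := fun y => ‖y‖)
      (continuous_norm.aestronglyMeasurable) hT.aemeasurable).mp hQmom
    exact this
  have hfT : Integrable (fun x => f (T x)) P := by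
    have := (integrable_map_measure (f := T) (g := f)
      hf.continuous.aestronglyMeasurable hT.aemeasurable).mp hfQ
    exact this
  have hns : Integrable (fun x => ‖x - T x‖) P := by
    refine Integrable.mono' (hPmom.add hTnorm)
      ?_ (Filter.Eventually.of_forall fun x => ?_)
    · exact ((measurable_id.sub hT).norm).aestronglyMeasurable
    · simpa using norm_sub_le x (T x)
  -- equality of integrals forces pointwise equality a.e.
  have hsub : Integrable (fun x => f x - f (T x)) P := by
    exact hfP.sub hfT
  have hint : ∫ x, (f x - f (T x)) ∂P = ∫ x, ‖x - T x‖ ∂P := by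
    rw [integral_sub hfP hfT]
    rw [integral_map hT.aemeasurable hf.continuous.aestronglyMeasurable] at hopt
    exact hopt
  have hptwise : ∀ x, f x - f (T x) ≤ ‖x - T x‖ := fun x => by
    have := hf.dist_le_mul x (T x)
    rw [NNReal.coe_one, one_mul, dist_eq_norm, dist_eq_norm] at this
    calc f x - f (T x) ≤ |f x - f (T x)| := le_abs_self _
      _ ≤ ‖x - T x‖ := by rwa [Real.norm_eq_abs] at this
  have hzero : (fun x => ‖x - T x‖ - (f x - f (T x))) =ᵐ[P] 0 := by
    refine (integral_eq_zero_iff_of_nonneg_ae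
      (Filter.Eventually.of_forall fun x => sub_nonneg.2 (hptwise x))
      (hns.sub hsub)).mp ?_
    rw [integral_sub hns hsub, hint, sub_self]
  filter_upwards [hmon, hmove, hzero, hdfP, hduP] with x hmx hmvx hzx hdfx hdux
  have hfeq : f x - f (T x) = ‖x - T x‖ := by
    have h0 : ‖x - T x‖ - (f x - f (T x)) = 0 := hzx
    linarith
  exact ⟨hdfx, hdux, grad_of_ray f hf x (T x) hmvx hfeq hdfx,
    grad_of_ray u hu x (T x) hmvx hmx hdux⟩
end
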